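/- Let r_i and r_j be positive integers, g = gcd(r_i, r_j), and e = r_i + r_j − g. Define a sequence (a_s) of natural numbers by choosing a_0 to be a multiple of g with 0 ≤ a_0 ≤ e, and setting a_{s+1} = a_s − r_i if a_s ≥ r_i, and a_{s+1} = a_s + r_j otherwise. Then: (i) for every s, exactly one of the conditions a_s ≥ r_i and e − a_s ≥ r_j holds (deadlock-freedom: at each step exactly one endpoint is enabled); and (ii) the sequence is periodic with period (r_i + r_j)/g, and among any (r_i + r_j)/g consecutive steps the condition a_s ≥ r_i holds exactly r_j/g times and the condition e − a_s ≥ r_j holds exactly r_i/g times (ratio-compliance: the two endpoints obtain priority in the ratio r_j : r_i). -/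

import Mathlib

/-- Bead reversal on a single edge between `P_i` and `P_j`, under heavy load:
with `g = gcd(r_i, r_j)` and `e = r_i + r_j − g` beads on the edge, `a s` of which sit
at `P_i`'s end at step `s`, starting from a multiple of `g` and moving `r_i` beads to
`P_j` whenever `a s ≥ r_i` (else `P_j` sends `r_j` beads back):
(i) at each step exactly one of `a s ≥ r_i` and `e − a s ≥ r_j` holds
(deadlock-freedom), and
(ii) the sequence is periodic with period `(r_i + r_j)/g`, and among any
`(r_i + r_j)/g` consecutive steps, `a t ≥ r_i` holds exactly `r_j/g` times and
`e − a t ≥ r_j` holds exactly `r_i/g` times (ratio-compliance). -/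
theorem single_edge_bead_reversal (ri rj : ℕ) (hri : 0 < ri) (hrj : 0 < rj)
    (a : ℕ → ℕ)
    (h0div : Nat.gcd ri rj ∣ a 0) (h0le : a 0 ≤ ri + rj - Nat.gcd ri rj)
    (hrec : ∀ s, a (s + 1) = if ri ≤ a s then a s - ri else a s + rj) :
    (∀ s, a s ≤ ri + rj - Nat.gcd ri rj ∧
        Xor' (ri ≤ a s) (rj ≤ ri + rj - Nat.gcd ri rj - a s)) ∧
      (∀ s, a (s + (ri + rj) / Nat.gcd ri rj) = a s) ∧
      ∀ s, {t ∈ Set.Ico s (s + (ri + rj) / Nat.gcd ri rj) | ri ≤ a t}.ncard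
            = rj / Nat.gcd ri rj ∧
          {t ∈ Set.Ico s (s + (ri + rj) / Nat.gcd ri rj) |
              rj ≤ ri + rj - Nat.gcd ri rj - a t}.ncard
            = ri / Nat.gcd ri rj := by
  set g := Nat.gcd ri rj with hg
  have hgpos : 0 < g := Nat.gcd_pos_of_pos_left _ hri
  have hgri : g ∣ ri := Nat.gcd_dvd_left _ _
  have hgrj : g ∣ rj := Nat.gcd_dvd_right _ _
  have hgle : g ≤ ri := Nat.le_of_dvd hri hgri
  obtain ⟨u, hu⟩ := hgri
  obtain ⟨v, hv⟩ := hgrj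
  set e := ri + rj - g with he
  set p := (ri + rj) / g with hp
  have hpv : p = u + v := by
    rw [hp, hu, hv, ← Nat.mul_add, Nat.mul_div_cancel_left _ hgpos]
  have hug : ri / g = u := by rw [hu, Nat.mul_div_cancel_left _ hgpos]
  have hvg : rj / g = v := by rw [hv, Nat.mul_div_cancel_left _ hgpos]
  -- invariant
  have inv : ∀ s, g ∣ a s ∧ a s ≤ e := by
    intro s
    induction s with
    | zero => exact ⟨h0div, h0le⟩
    | succ n ih =>
      obtain ⟨hdvd, hle⟩ := ih
      rw [hrec n]
      split_ifs with h
      · exact ⟨Nat.dvd_sub hdvd ⟨u, hu⟩, by omega⟩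
      · have h1 : a n < ri := lt_of_not_ge h
        have h2 : g ∣ ri - a n := Nat.dvd_sub ⟨u, hu⟩ hdvd
        have h3 : g ≤ ri - a n := Nat.le_of_dvd (by omega) h2
        exact ⟨Nat.dvd_add hdvd ⟨v, hv⟩, by omega⟩
  -- gap lemma
  have key : ∀ s, a s < ri → a s + g ≤ ri := by
    intro s h
    have h2 : g ∣ ri - a s := Nat.dvd_sub ⟨u, hu⟩ (inv s).1
    have h3 : g ≤ ri - a s := Nat.le_of_dvd (by omega) h2
    omega
  -- part (i)
  have part1 : ∀ s, a s ≤ e ∧ Xor' (ri ≤ a s) (rj ≤ e - a s) := by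
    intro s
    refine ⟨(inv s).2, ?_⟩
    rcases le_or_gt ri (a s) with h | h
    · have := (inv s).2
      left
      exact ⟨h, by omega⟩
    · have := key s h
      right
      exact ⟨by omega, by omega⟩
  -- step congruence
  have step : ∀ s, a (s + 1) % (ri + rj) = (a s + rj) % (ri + rj) := by
    intro s
    rw [hrec s]
    split_ifs with h
    · have hx : a s + rj = (a s - ri) + (ri + rj) := by omega
      rw [hx, Nat.add_mod_right]
    · rfl
  have iter : ∀ s t, a (s + t) % (ri + rj) = (a s + t * rj) % (ri + rj) := by
    intro s t
    induction t with
    | zero => simp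
    | succ n ih =>
      have : s + (n + 1) = (s + n) + 1 := by omega
      rw [this, step (s + n), Nat.add_mod, ih, ← Nat.add_mod]
      congr 1
      ring
  -- periodicity
  have hperiod : ∀ s, a (s + p) = a s := by
    intro s
    have h1 := iter s p
    have h2 : p * rj = (ri + rj) * v := by
      rw [hpv, hu, hv]; ring
    rw [h2] at h1
    have h3 : (a s + (ri + rj) * v) % (ri + rj) = a s % (ri + rj) := by
      rw [Nat.add_mul_mod_self_left]
    rw [h3] at h1
    have h4 : a (s + p) < ri + rj := by have := (inv (s + p)).2; omega
    have h5 : a s < ri + rj := by have := (inv s).2; omega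
    rw [Nat.mod_eq_of_lt h4, Nat.mod_eq_of_lt h5] at h1
    exact h1
  -- counting
  have term : ∀ t, (a (t + 1) : ℤ) - a t = (rj : ℤ) - (if ri ≤ a t then ((ri : ℤ) + rj) else 0) := by
    intro t
    rw [hrec t]
    split_ifs with h
    · rw [Nat.cast_sub h]; ring
    · push_cast; ring
  have count1 : ∀ s, ((Finset.Ico s (s + p)).filter (fun t => ri ≤ a t)).card = v := by
    intro s
    set k := ((Finset.Ico s (s + p)).filter (fun t => ri ≤ a t)).card with hk
    have tele := Finset.sum_range_sub (fun i => (a (s + i) : ℤ)) p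
    simp only [← Nat.add_assoc, Nat.add_zero] at tele
    have tele2 : (∑ t ∈ Finset.Ico s (s + p), ((a (t + 1) : ℤ) - a t)) = 0 := by
      rw [Finset.sum_Ico_eq_sum_range]
      simp only [Nat.add_sub_cancel_left]
      rw [tele, hperiod s]
      ring
    have split : (∑ t ∈ Finset.Ico s (s + p), ((a (t + 1) : ℤ) - a t))
        = p * rj - k * ((ri : ℤ) + rj) := by
      calc (∑ t ∈ Finset.Ico s (s + p), ((a (t + 1) : ℤ) - a t))
          = ∑ t ∈ Finset.Ico s (s + p), ((rj : ℤ) - (if ri ≤ a t then ((ri : ℤ) + rj) else 0)) := by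
            exact Finset.sum_congr rfl (fun t _ => term t)
        _ = (Finset.Ico s (s + p)).card * (rj : ℤ)
              - ∑ t ∈ Finset.Ico s (s + p), (if ri ≤ a t then ((ri : ℤ) + rj) else 0) := by
            rw [Finset.sum_sub_distrib, Finset.sum_const, nsmul_eq_mul]
        _ = p * rj - k * ((ri : ℤ) + rj) := by
            rw [Nat.card_Ico, Nat.add_sub_cancel_left, ← Finset.sum_filter, Finset.sum_const,
              nsmul_eq_mul]
    have hkeq : (k : ℤ) * ((ri : ℤ) + rj) = (v : ℤ) * ((ri : ℤ) + rj) := by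
      have h2 : (p : ℤ) * rj = (v : ℤ) * ((ri : ℤ) + rj) := by
        have : p * rj = v * (ri + rj) := by rw [hpv, hu, hv]; ring
        exact_mod_cast congrArg (Nat.cast : ℕ → ℤ) this
      rw [split, h2] at tele2
      linarith
    have hne : ((ri : ℤ) + rj) ≠ 0 := by positivity
    have : (k : ℤ) = v := mul_right_cancel₀ hne hkeq
    exact_mod_cast this
  refine ⟨part1, hperiod, ?_⟩
  intro s
  have hset1 : {t ∈ Set.Ico s (s + p) | ri ≤ a t}
      = ↑((Finset.Ico s (s + p)).filter (fun t => ri ≤ a t)) := by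
    ext t
    simp [Set.mem_Ico, Finset.mem_Ico, and_comm]
  have hset2 : {t ∈ Set.Ico s (s + p) | rj ≤ e - a t}
      = ↑((Finset.Ico s (s + p)).filter (fun t => ¬ ri ≤ a t)) := by
    ext t
    have hx := (part1 t).2
    simp only [Set.mem_setOf_eq, Set.mem_Ico, Finset.coe_filter, Finset.mem_Ico]
    rw [Xor'] at hx; unfold Xor at hx
    tauto
  have hcard2 : ((Finset.Ico s (s + p)).filter (fun t => ¬ ri ≤ a t)).card = u := by
    have := Finset.card_filter_add_card_filter_not
      (s := Finset.Ico s (s + p)) (p := fun t => ri ≤ a t)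
    rw [count1 s, Nat.card_Ico, Nat.add_sub_cancel_left] at this
    omega
  constructor
  · rw [hset1, Set.ncard_coe_finset, count1 s, hvg]
  · rw [hset2, Set.ncard_coe_finset, hcard2, hug]
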